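/- Let Σ be a closed surface and let A be a symmetric 2-tensor field on Σ that is trace-free (with respect to a Riemannian metric g) and satisfies the Codazzi equation (∇_X A)(Y,Z) = (∇_Y A)(X,Z) for all vector fields X,Y,Z. Then at every point where A ≠ 0, one has |∇A|² = 2 |∇|A||². -/

import Mathlib

open Finset

/-- pointwise form, in an orthonormal frame at a point of a surface, of the
identity |∇A|² = 2|∇|A||² for a trace-free symmetric Codazzi tensor A ≠ 0.  Here
`A j k` are the components of the tensor and `T i j k` the components of its covariant
derivative (∇_i A)(j,k); the gradient of |A| has components (∑ T i j k · A j k)/|A|. -/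
theorem stmt4 (A : Fin 2 → Fin 2 → ℝ) (T : Fin 2 → Fin 2 → Fin 2 → ℝ)
    (hAsymm : ∀ j k, A j k = A k j)
    (hAtf : A 0 0 + A 1 1 = 0)
    (hTsymm : ∀ i j k, T i j k = T i k j)
    (hTtf : ∀ i, T i 0 0 + T i 1 1 = 0)
    (hCodazzi : ∀ i j k, T i j k = T j i k)
    (hA : ∑ j, ∑ k, (A j k) ^ 2 ≠ 0) :
    ∑ i, ∑ j, ∑ k, (T i j k) ^ 2 =
      2 * ∑ i, ((∑ j, ∑ k, T i j k * A j k) / Real.sqrt (∑ j, ∑ k, (A j k) ^ 2)) ^ 2 := by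
  have hA10 : A 1 0 = A 0 1 := hAsymm 1 0
  have hA11 : A 1 1 = -A 0 0 := by linarith [hAtf]
  have h010 : T 0 1 0 = T 0 0 1 := hTsymm 0 1 0
  have h100 : T 1 0 0 = T 0 0 1 := by rw [hCodazzi 1 0 0, hTsymm 0 1 0]
  have h011 : T 0 1 1 = -T 0 0 0 := by linarith [hTtf 0]
  have h101 : T 1 0 1 = -T 0 0 0 := by rw [hCodazzi 1 0 1, h011]
  have h110 : T 1 1 0 = -T 0 0 0 := by rw [hTsymm 1 1 0, h101]
  have h111 : T 1 1 1 = -T 0 0 1 := by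
    have := hTtf 1; rw [h100] at this; linarith
  have hS : (0:ℝ) ≤ ∑ j, ∑ k, (A j k) ^ 2 := by positivity
  have hsq : Real.sqrt (∑ j, ∑ k, (A j k) ^ 2) ^ 2 = ∑ j, ∑ k, (A j k) ^ 2 :=
    Real.sq_sqrt hS
  have hne : Real.sqrt (∑ j, ∑ k, (A j k) ^ 2) ≠ 0 := by
    intro h
    apply hA
    rw [← hsq, h]; ring
  rw [Fin.sum_univ_two, Fin.sum_univ_two]
  simp only [Fin.sum_univ_two] at *
  field_simp
  rw [hA10, hA11, h010, h100, h011, h101, h110, h111]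
  rw [Real.sq_sqrt (by positivity)]
  nlinarith [hsq, sq_nonneg (A 0 0), sq_nonneg (A 0 1)]
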